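/- Let N ≥ 1 be an integer, b ∈ ℝ, and z₁, …, z_N pairwise distinct real numbers, w₁, …, w_N nonzero real numbers, and n an integer with 1 ≤ n ≤ N. (a) If d_k := −2 w_k / ∏_{j≠k}(z_k − z_j) for each k, then ∑_{k=1}^{N} ( b z_k^{N−n} / (−2 w_k) ) · d_k equals b if n = 1 and 0 otherwise. (b) If d_k := 2 w_k ( ∑_{j≠k} z_j ) / ∏_{j≠k}(z_k − z_j) for each k, then ∑_{k=1}^{N} ( b z_k^{N−n} / (−2 w_k) ) · d_k equals b if n = 2 and 0 otherwise. -/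

import Mathlib

open Polynomial Finset

lemma basis_coeff {N : ℕ} (z : Fin N → ℝ) (hz : Function.Injective z) (k : Fin N) :
    (Lagrange.basis Finset.univ z k).coeff (N - 1)
      = (∏ j ∈ Finset.univ.erase k, (z k - z j))⁻¹ := by
  have hinj : Set.InjOn z (Finset.univ : Finset (Fin N)) := hz.injOn
  have hdeg : (Lagrange.basis Finset.univ z k).natDegree = N - 1 := by
    simpa using Lagrange.natDegree_basis hinj (Finset.mem_univ k)
  rw [← hdeg, Polynomial.coeff_natDegree]
  rw [Lagrange.basis, Polynomial.leadingCoeff_prod, ← Finset.prod_inv_distrib]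
  refine Finset.prod_congr rfl fun j hj => ?_
  rw [Lagrange.basisDivisor, leadingCoeff_mul, leadingCoeff_C, (monic_X_sub_C (z j)).leadingCoeff,
    mul_one]

lemma lagrange_coeff_sum {N : ℕ} (z : Fin N → ℝ) (hz : Function.Injective z)
    (p : Polynomial ℝ) (hp : p.degree < N) :
    ∑ k : Fin N, p.eval (z k) / ∏ j ∈ Finset.univ.erase k, (z k - z j) = p.coeff (N - 1) := by
  have hinj : Set.InjOn z (Finset.univ : Finset (Fin N)) := hz.injOn
  have heq := Lagrange.eq_interpolate (s := Finset.univ) (v := z) hinj (by simpa using hp)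
  have h2 := congrArg (fun q => Polynomial.coeff q (N - 1)) heq
  simp only [Lagrange.interpolate_apply, finset_sum_coeff, coeff_C_mul] at h2
  rw [h2]
  exact Finset.sum_congr rfl fun k _ => by rw [basis_coeff z hz k, div_eq_mul_inv]

lemma pow_div_sum {N : ℕ} (z : Fin N → ℝ) (hz : Function.Injective z) (m : ℕ) (hm : m < N) :
    ∑ k : Fin N, z k ^ m / ∏ j ∈ Finset.univ.erase k, (z k - z j)
      = if m = N - 1 then 1 else 0 := by
  have h := lagrange_coeff_sum z hz (X ^ m) (by
    rw [degree_X_pow]; exact_mod_cast hm)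
  simp only [eval_pow, eval_X, coeff_X_pow] at h
  rw [h]
  by_cases hmn : m = N - 1 <;> simp [hmn, eq_comm]

lemma powN_div_sum {N : ℕ} (hN : 1 ≤ N) (z : Fin N → ℝ) (hz : Function.Injective z) :
    ∑ k : Fin N, z k ^ N / ∏ j ∈ Finset.univ.erase k, (z k - z j) = ∑ j : Fin N, z j := by
  have hdeg : ((X : ℝ[X]) ^ N - Lagrange.nodal Finset.univ z).degree < N := by
    have := Polynomial.degree_sub_lt (p := (X : ℝ[X]) ^ N) (q := Lagrange.nodal Finset.univ z)
      (by rw [degree_X_pow, Lagrange.degree_nodal]; simp)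
      ((monic_X_pow N).ne_zero)
      ((monic_X_pow N).leadingCoeff.trans Lagrange.nodal_monic.leadingCoeff.symm)
    simpa using this
  have h := lagrange_coeff_sum z hz _ hdeg
  have heval : ∀ k : Fin N, ((X : ℝ[X]) ^ N - Lagrange.nodal Finset.univ z).eval (z k)
      = z k ^ N := by
    intro k
    simp [Lagrange.eval_nodal_at_node (Finset.mem_univ k)]
  have hcoeff : ((X : ℝ[X]) ^ N - Lagrange.nodal Finset.univ z).coeff (N - 1)
      = ∑ j : Fin N, z j := by
    have hn : (Lagrange.nodal Finset.univ z).coeff (N - 1) = -∑ j : Fin N, z j := by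
      have := Polynomial.prod_X_sub_C_coeff_card_pred (Finset.univ : Finset (Fin N)) z
        (by simpa using (show 0 < N by omega))
      simpa [Lagrange.nodal] using this
    have hx : ((X : ℝ[X]) ^ N).coeff (N - 1) = 0 := by
      rw [coeff_X_pow]; simp; omega
    rw [coeff_sub, hx, hn]; ring
  rw [← hcoeff, ← h]
  exact Finset.sum_congr rfl fun k _ => by rw [heval k]

theorem abelian_coordinates_linear_flow (N : ℕ) (hN : 1 ≤ N) (b : ℝ)
    (z : Fin N → ℝ) (hz : Function.Injective z)
    (w : Fin N → ℝ) (hw : ∀ k, w k ≠ 0)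
    (n : ℕ) (hn1 : 1 ≤ n) (hn2 : n ≤ N) :
    (∑ k : Fin N,
        (b * z k ^ (N - n) / (-2 * w k))
          * (-2 * w k / ∏ j ∈ Finset.univ.erase k, (z k - z j))
      = if n = 1 then b else 0) ∧
    (∑ k : Fin N,
        (b * z k ^ (N - n) / (-2 * w k))
          * (2 * w k * (∑ j ∈ Finset.univ.erase k, z j)
              / ∏ j ∈ Finset.univ.erase k, (z k - z j))
      = if n = 2 then b else 0) := by
  set P : Fin N → ℝ := fun k => ∏ j ∈ Finset.univ.erase k, (z k - z j) with hP
  have hPne : ∀ k, P k ≠ 0 := by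
    intro k
    refine Finset.prod_ne_zero_iff.mpr fun j hj => sub_ne_zero_of_ne fun h => ?_
    exact (Finset.mem_erase.mp hj).1.symm (hz h)
  have hSsum : ∀ k : Fin N, ∑ j ∈ Finset.univ.erase k, z j = (∑ j : Fin N, z j) - z k :=
    fun k => Finset.sum_erase_eq_sub (Finset.mem_univ k)
  set S : ℝ := ∑ j : Fin N, z j with hS
  have hpow : ∑ k : Fin N, z k ^ (N - n) / P k = if n = 1 then 1 else 0 := by
    rw [pow_div_sum z hz (N - n) (by omega)]
    congr 1
    simp only [eq_iff_iff]
    omega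
  constructor
  · have hterm : ∀ k : Fin N, (b * z k ^ (N - n) / (-2 * w k)) * (-2 * w k / P k)
        = b * (z k ^ (N - n) / P k) := by
      intro k
      have h1 := hw k
      have h2 := hPne k
      field_simp
    trans ∑ k : Fin N, b * (z k ^ (N - n) / P k)
    · exact Finset.sum_congr rfl fun k _ => hterm k
    rw [← Finset.mul_sum, hpow]
    split <;> ring
  · have hterm : ∀ k : Fin N, (b * z k ^ (N - n) / (-2 * w k)) * (2 * w k * (S - z k) / P k)
        = b * (z k ^ (N - n + 1) / P k) - (b * S) * (z k ^ (N - n) / P k) := by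
      intro k
      have h1 := hw k
      have h2 := hPne k
      field_simp
      ring
    have hsplit : ∑ k : Fin N,
        (b * z k ^ (N - n) / (-2 * w k)) * (2 * w k * (∑ j ∈ Finset.univ.erase k, z j) / P k)
        = b * (∑ k : Fin N, z k ^ (N - n + 1) / P k) - (b * S) * (if n = 1 then 1 else 0) := by
      rw [← hpow, Finset.mul_sum, Finset.mul_sum, ← Finset.sum_sub_distrib]
      exact Finset.sum_congr rfl fun k _ => by rw [hSsum k]; exact hterm k
    rw [hsplit]
    rcases eq_or_lt_of_le hn1 with h1 | h1
    · -- n = 1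
      have hn : n = 1 := h1.symm
      subst hn
      have : N - 1 + 1 = N := by omega
      rw [this, powN_div_sum hN z hz, ← hS]
      have h12 : (1 : ℕ) ≠ 2 := by omega
      simp only [h12, if_false, if_true, if_pos rfl]
      ring
    · -- n ≥ 2
      have h2 : 2 ≤ n := h1
      have hlt : N - n + 1 < N := by omega
      rw [pow_div_sum z hz (N - n + 1) hlt]
      have hiff : (N - n + 1 = N - 1) ↔ n = 2 := by omega
      have hne1 : n ≠ 1 := by omega
      simp only [hiff, hne1, if_false]
      split <;> ring
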